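/- Let G be a finite non-Abelian AC-group and let C_1, …, C_n be the distinct centralizers of non-central elements of G. Then the characteristic polynomial of the adjacency matrix of the commuting graph Γ_G equals (X + 1)^{(Σ_{i=1}^n |C_i|) − n(|Z(G)| + 1)} · Π_{i=1}^n (X − (|C_i| − |Z(G)| − 1)); equivalently, the spectrum of Γ_G consists of the eigenvalue −1 with multiplicity Σ_{i=1}^n |C_i| − n(|Z(G)| + 1) together with the eigenvalues |C_i| − |Z(G)| − 1 for i = 1, …, n. -/

import Mathlib

open scoped Classical

/-- The commuting graph of a group `G`: its vertices are the non-central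
elements of `G`, and two distinct vertices are adjacent iff they commute. -/
noncomputable def commGraph (G : Type*) [Group G] :
    SimpleGraph {g : G // g ∉ Subgroup.center G} where
  Adj x y := x ≠ y ∧ (x : G) * y = (y : G) * x
  symm := ⟨fun _ _ h => ⟨h.1.symm, h.2.symm⟩⟩
  loopless := ⟨fun _ h => h.1 rfl⟩

lemma adjMatrix_isHermitian {V : Type*} [Fintype V] (Γ : SimpleGraph V) :
    (Γ.adjMatrix ℝ).IsHermitian := by
  ext i j
  simp [Matrix.conjTranspose_apply, SimpleGraph.adj_comm]

/-- The energy of a finite graph: the sum of the absolute values of the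
eigenvalues of its adjacency matrix. -/
noncomputable def graphEnergy {V : Type*} [Fintype V] (Γ : SimpleGraph V) : ℝ :=
  ∑ i, |(adjMatrix_isHermitian Γ).eigenvalues i|

/-- `G` is an AC-group: the centralizer of every non-central element is Abelian. -/
def IsACGroup (G : Type*) [Group G] : Prop :=
  ∀ x : G, x ∉ Subgroup.center G →
    ∀ y ∈ Subgroup.centralizer ({x} : Set G), ∀ z ∈ Subgroup.centralizer ({x} : Set G),
      y * z = z * y

open Polynomial

set_option synthInstance.maxHeartbeats 1000000 in
set_option maxHeartbeats 1000000 in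
lemma charpoly_completeMatrix (W : Type*) [Fintype W] [Nonempty W] [DecidableEq W] :
    (Matrix.of (fun i j : W => if i = j then (0:ℝ) else 1)).charpoly =
      (X + 1) ^ (Fintype.card W - 1) *
        (X - Polynomial.C ((Fintype.card W : ℝ) - 1)) := by
  set m := Fintype.card W with hm
  have hm1 : 1 ≤ m := Fintype.card_pos
  set A : Matrix W W ℝ := Matrix.of (fun i j : W => if i = j then (0:ℝ) else 1) with hA
  set φ : ℝ[X] →+* RatFunc ℝ := (algebraMap ℝ[X] (RatFunc ℝ)) with hφ
  have hinj : Function.Injective φ := RatFunc.algebraMap_injective ℝ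
  apply hinj
  set t : RatFunc ℝ := φ (X + 1) with ht
  have ht0 : t ≠ 0 := by
    rw [ht]
    intro h
    have h2 : (X + 1 : ℝ[X]) = 0 := hinj (h.trans (map_zero φ).symm)
    have h3 := congrArg (Polynomial.eval 0) h2
    simp at h3
  have key : (φ.mapMatrix A.charmatrix) =
      t • ((1 : Matrix W W (RatFunc ℝ)) +
        Matrix.replicateCol Unit (fun _ : W => -t⁻¹) * Matrix.replicateRow Unit (fun _ : W => (1 : RatFunc ℝ))) := by
    ext i j
    by_cases h : i = j
    · subst h
      simp [RingHom.mapMatrix_apply, Matrix.charmatrix_apply_eq, hA, Matrix.one_apply_eq,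
        Matrix.mul_apply, mul_add, map_add, map_one]
      ring_nf
      rw [mul_inv_cancel₀ ht0]
      ring_nf
      rw [ht, map_add, map_one]
      ring
    · simp [RingHom.mapMatrix_apply, Matrix.charmatrix_apply_ne _ _ _ h, hA, h,
        Matrix.one_apply_ne h, Matrix.mul_apply, mul_inv_cancel₀ ht0]
  have hdet : φ A.charpoly = t ^ m - (m : RatFunc ℝ) * t ^ (m - 1) := by
    rw [Matrix.charpoly, RingHom.map_det, key, Matrix.det_smul,
      Matrix.det_one_add_replicateCol_mul_replicateRow]
    have hdot : dotProduct (fun _ : W => (1 : RatFunc ℝ)) (fun _ : W => -t⁻¹)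
        = -(m : RatFunc ℝ) * t⁻¹ := by
      simp [dotProduct, Finset.sum_const, ← hm]
    rw [hdot, ← hm]
    have hpow : t ^ m = t ^ (m - 1) * t := by
      rw [← pow_succ, Nat.sub_add_cancel hm1]
    rw [hpow]
    field_simp
    ring
  rw [hdet, map_mul, map_pow, map_sub]
  have hC : φ (Polynomial.C ((m : ℝ) - 1)) = (m : RatFunc ℝ) - 1 := by
    have h4 : (Polynomial.C ((m : ℝ) - 1)) = ((m : ℕ) : ℝ[X]) - 1 := by
      rw [map_sub, map_one, Polynomial.C_eq_natCast]
    rw [h4, map_sub, map_natCast, map_one]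
  rw [hC, ← ht]
  have hφX : φ X = t - 1 := by rw [ht, map_add, map_one]; ring
  rw [hφX]
  have hpow : t ^ m = t ^ (m - 1) * t := by rw [← pow_succ, Nat.sub_add_cancel hm1]
  rw [hpow]
  ring


open Polynomial in
/-- The characteristic polynomial of the adjacency matrix of the commuting graph of a
finite non-Abelian AC-group, where `C 1, …, C n` are the distinct centralizers of
non-central elements. -/
theorem charpoly_commGraph_of_isACGroup
    (G : Type*) [Group G] [Fintype G] (hna : ∃ x y : G, x * y ≠ y * x)
    (hAC : IsACGroup G)
    (n : ℕ) (C : Fin n → Subgroup G)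
    (hCinj : Function.Injective C)
    (hCcent : ∀ i, ∃ x : G, x ∉ Subgroup.center G ∧ C i = Subgroup.centralizer {x})
    (hCall : ∀ x : G, x ∉ Subgroup.center G → ∃ i, C i = Subgroup.centralizer {x}) :
    ((commGraph G).adjMatrix ℝ).charpoly =
      (X + 1) ^ (∑ i, Nat.card (C i) - n * (Nat.card (Subgroup.center G) + 1)) *
        ∏ i, (X - Polynomial.C ((Nat.card (C i) : ℝ) - (Nat.card (Subgroup.center G) : ℝ) - 1)) := by
  classical
  -- abbreviations
  set Z := Subgroup.center G with hZ
  -- membership lemma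
  have memc : ∀ a b : G, a ∈ Subgroup.centralizer ({b} : Set G) ↔ b * a = a * b := by
    intro a b
    rw [Subgroup.mem_centralizer_iff]
    simp
  -- core AC fact
  have sub : ∀ x y : G, x ∉ Z → x * y = y * x →
      Subgroup.centralizer ({x} : Set G) ≤ Subgroup.centralizer ({y} : Set G) := by
    intro x y hx hxy g hg
    have hy : y ∈ Subgroup.centralizer ({x} : Set G) := (memc y x).2 hxy
    exact (memc g y).2 (hAC x hx y hy g hg)
  have key : ∀ x y : G, x ∉ Z → y ∉ Z → x * y = y * x →
      Subgroup.centralizer ({x} : Set G) = Subgroup.centralizer ({y} : Set G) := by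
    intro x y hx hy hxy
    exact le_antisymm (sub x y hx hxy) (sub y x hy hxy.symm)
  have selfmem : ∀ x : G, x ∈ Subgroup.centralizer ({x} : Set G) := fun x => (memc x x).2 rfl
  -- the block function
  set V := {g : G // g ∉ Z} with hV
  have hfex : ∀ v : V, ∃ i, C i = Subgroup.centralizer {(v : G)} := fun v => hCall v.1 v.2
  set f : V → Fin n := fun v => (hfex v).choose with hfdef
  have hf : ∀ v : V, C (f v) = Subgroup.centralizer {(v : G)} := fun v => (hfex v).choose_spec
  have hfiff : ∀ v w : V, f v = f w ↔ (v : G) * w = (w : G) * v := by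
    intro v w
    constructor
    · intro h
      have : Subgroup.centralizer {(v : G)} = Subgroup.centralizer {(w : G)} := by
        rw [← hf v, ← hf w, h]
      have hwmem : (w : G) ∈ Subgroup.centralizer {(v : G)} := this ▸ selfmem (w : G)
      exact ((memc (w : G) (v : G)).1 hwmem)
    · intro h
      apply hCinj
      rw [hf v, hf w]
      exact key _ _ v.2 w.2 h
  have hAdj : ∀ v w : V, (commGraph G).Adj v w ↔ v ≠ w ∧ f v = f w := by
    intro v w
    constructor
    · rintro ⟨h1, h2⟩; exact ⟨h1, (hfiff v w).2 h2⟩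
    · rintro ⟨h1, h2⟩; exact ⟨h1, (hfiff v w).1 h2⟩
  -- f is surjective
  have hfsurj : ∀ i, ∃ v : V, f v = i := by
    intro i
    obtain ⟨x, hx, hxc⟩ := hCcent i
    refine ⟨⟨x, hx⟩, ?_⟩
    apply hCinj
    rw [hf, hxc]
  -- block triangularity
  have hbt : ((commGraph G).adjMatrix ℝ).BlockTriangular f := by
    intro v w hlt
    by_cases h : (commGraph G).Adj v w
    · exact absurd ((hAdj v w).1 h).2 (by intro he; rw [he] at hlt; exact lt_irrefl _ hlt)
    · simp [SimpleGraph.adjMatrix, h]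
  -- block sizes
  have hblocksize : ∀ i : Fin n,
      Fintype.card {v : V // f v = i} = Nat.card (C i) - Nat.card Z := by
    intro i
    obtain ⟨x, hx, hxc⟩ := hCcent i
    have hmemiff : ∀ v : V, f v = i ↔ (v : G) ∈ C i := by
      intro v
      constructor
      · intro h
        rw [← h, hf v]
        exact selfmem _
      · intro h
        apply hCinj
        rw [hf v]
        rw [hxc] at h
        rw [hxc]
        exact key _ _ v.2 hx ((memc (v : G) x).1 h).symm
    have e : {v : V // f v = i} ≃ ((C i : Set G) \ (Z : Set G) : Set G) :=
      { toFun := fun v => ⟨v.1.1, ⟨(hmemiff v.1).1 v.2, v.1.2⟩⟩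
        invFun := fun g => ⟨⟨g.1, g.2.2⟩, (hmemiff ⟨g.1, g.2.2⟩).2 g.2.1⟩
        left_inv := fun v => by ext; rfl
        right_inv := fun g => by ext; rfl }
    have hZle : (Z : Set G) ⊆ (C i : Set G) := by
      rw [hxc]
      exact Subgroup.center_le_centralizer _
    calc Fintype.card {v : V // f v = i}
        = Nat.card ((C i : Set G) \ (Z : Set G) : Set G) := by
          rw [← Nat.card_eq_fintype_card]
          exact Nat.card_congr e
      _ = ((C i : Set G) \ (Z : Set G)).ncard := Nat.card_coe_set_eq _
      _ = (C i : Set G).ncard - (Z : Set G).ncard := Set.ncard_diff hZle (Set.toFinite _)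
      _ = Nat.card (C i) - Nat.card Z := by
          rw [← Nat.card_coe_set_eq, ← Nat.card_coe_set_eq]
          rfl
  -- each block is nonempty, indeed card Z < card C i
  have hZlt : ∀ i : Fin n, Nat.card Z + 1 ≤ Nat.card (C i) := by
    intro i
    obtain ⟨x, hx, hxc⟩ := hCcent i
    have hss : (Z : Set G) ⊂ (C i : Set G) := by
      constructor
      · rw [hxc]; exact Subgroup.center_le_centralizer _
      · intro hsub
        exact hx (hsub (by rw [hxc]; exact selfmem x))
    have := Set.ncard_lt_ncard hss (Set.toFinite _)
    rw [← Nat.card_coe_set_eq, ← Nat.card_coe_set_eq] at this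
    have h1 : Nat.card ((Z : Set G) : Type _) = Nat.card Z := rfl
    have h2 : Nat.card (((C i : Set G)) : Type _) = Nat.card (C i) := rfl
    rw [h1, h2] at this
    omega
  have hne : ∀ i : Fin n, Nonempty {v : V // f v = i} := by
    intro i
    obtain ⟨v, hv⟩ := hfsurj i
    exact ⟨⟨v, hv⟩⟩
  -- compute the charpoly blockwise
  rw [Matrix.charpoly, (hbt.charmatrix).det_fintype]
  have hfactor : ∀ i : Fin n,
      (((commGraph G).adjMatrix ℝ).charmatrix.toSquareBlock f i).det =
        (X + 1) ^ (Nat.card (C i) - Nat.card Z - 1) *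
          (X - Polynomial.C ((Nat.card (C i) : ℝ) - (Nat.card Z : ℝ) - 1)) := by
    intro i
    have hblockeq : ((commGraph G).adjMatrix ℝ).toSquareBlock f i =
        Matrix.of (fun v w : {v : V // f v = i} => if v = w then (0:ℝ) else 1) := by
      ext v w
      by_cases h : v = w
      · subst h
        simp [Matrix.toSquareBlock_def]
      · have hvw : v.1 ≠ w.1 := fun he => h (Subtype.ext he)
        have hadj : (commGraph G).Adj v.1 w.1 := (hAdj _ _).2 ⟨hvw, v.2.trans w.2.symm⟩
        simp [Matrix.toSquareBlock_def, h, hadj]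
    haveI := hne i
    rw [← Matrix.charmatrix_toSquareBlock, hblockeq, ← Matrix.charpoly,
      charpoly_completeMatrix, hblocksize i]
    have hle : Nat.card Z ≤ Nat.card (C i) := le_trans (Nat.le_succ _) (hZlt i)
    have hcast : ((Nat.card (C i) - Nat.card Z : ℕ) : ℝ) - 1
        = (Nat.card (C i) : ℝ) - (Nat.card Z : ℝ) - 1 := by
      rw [Nat.cast_sub hle]
    rw [hcast]
  rw [Finset.prod_congr rfl (fun i _ => hfactor i)]
  rw [Finset.prod_mul_distrib, Finset.prod_pow_eq_pow_sum]
  -- exponent arithmetic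
  have hsum : ∑ i, Nat.card (C i) =
      (∑ i, (Nat.card (C i) - Nat.card Z - 1)) + n * (Nat.card Z + 1) := by
    have : ∀ i : Fin n, Nat.card (C i) =
        (Nat.card (C i) - Nat.card Z - 1) + (Nat.card Z + 1) := by
      intro i; have := hZlt i; omega
    calc ∑ i, Nat.card (C i)
        = ∑ i : Fin n, ((Nat.card (C i) - Nat.card Z - 1) + (Nat.card Z + 1)) :=
          Finset.sum_congr rfl (fun i _ => this i)
      _ = (∑ i, (Nat.card (C i) - Nat.card Z - 1)) + n * (Nat.card Z + 1) := by
          rw [Finset.sum_add_distrib, Finset.sum_const, Finset.card_univ, Fintype.card_fin,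
            smul_eq_mul]
  have hexp : ∑ i : Fin n, (Nat.card (C i) - Nat.card Z - 1)
      = ∑ i, Nat.card (C i) - n * (Nat.card Z + 1) := by omega
  rw [hexp]
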